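/- Let γ < 0, C₂ > 0, z₀ > 0, and let A be a real number with 0 < A < C₂ z₀^{2γ+1}; set B = 2γA/z₀ − 2γC₂ z₀^{2γ} (so that B > 0). Let z : ℝ → ℝ be nonnegative and differentiable on [0, 1/B) with z(0) = z₀, satisfying z'(t) + C₂ z(t)^{2γ+1} ≤ A (1 − Bt)^{−(2γ+1)/(2γ)} for all t ∈ [0, 1/B). Then z(t) ≤ z₀ (1 − Bt)^{−1/(2γ)} for all t ∈ [0, 1/B) (note that −1/(2γ) = 1/(2|γ|) > 0, so the bound vanishes as t → 1/B). -/

import Mathlib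

open Set

/-- MVT-type bound for `x ↦ x ^ p` below the diagonal. -/
lemma aux_rpow_diff {p m a δ : ℝ} (hm : 0 < m) (hma : m ≤ a) (hδ : 0 < δ)
    (hp : p - 1 < 0) : a ^ p - (a + δ) ^ p ≤ |p| * m ^ (p - 1) * δ := by
  have ha : 0 < a := hm.trans_le hma
  rcases le_or_gt 0 p with hp0 | hp0
  · have h1 : a ^ p ≤ (a + δ) ^ p :=
      Real.rpow_le_rpow ha.le (by linarith) hp0
    have h2 : (0:ℝ) ≤ |p| * m ^ (p - 1) * δ := by positivity
    linarith
  · -- MVT on [a, a + δ]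
    have hab : a < a + δ := by linarith
    have hmvt := exists_hasDerivAt_eq_slope (fun x => x ^ p)
      (fun x => p * x ^ (p - 1)) hab
      (fun x hx => by
        have hx0 : (0:ℝ) < x := lt_of_lt_of_le ha hx.1
        exact (Real.continuousAt_rpow_const x p (Or.inl hx0.ne')).continuousWithinAt)
      (fun x hx => Real.hasDerivAt_rpow_const (Or.inl (ha.trans hx.1).ne'))
    obtain ⟨c, hc, hceq⟩ := hmvt
    have hc0 : m < c := lt_of_le_of_lt hma hc.1
    have hcb : c ^ (p - 1) ≤ m ^ (p - 1) :=
      Real.rpow_le_rpow_of_nonpos hm hc0.le hp.le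
    have hkey : (a + δ) ^ p - a ^ p = p * c ^ (p - 1) * δ := by
      rw [show a + δ - a = δ by ring] at hceq
      field_simp at hceq
      linarith [hceq]
    have habs : |p| = -p := abs_of_neg hp0
    have hcp : (0:ℝ) < c ^ (p - 1) := Real.rpow_pos_of_pos (hm.trans hc0) _
    have h2 : (-p) * δ * (c ^ (p - 1)) ≤ (-p) * δ * (m ^ (p - 1)) :=
      mul_le_mul_of_nonneg_left hcb (by nlinarith)
    rw [habs]
    nlinarith [h2, hkey]

set_option maxHeartbeats 1000000 in
theorem stmt8 (γ C₂ z₀ A : ℝ) (hγ : γ < 0) (hC₂ : 0 < C₂) (hz₀ : 0 < z₀)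
    (hA : 0 < A) (hA' : A < C₂ * z₀ ^ (2 * γ + 1))
    (B : ℝ) (hB : B = 2 * γ * A / z₀ - 2 * γ * C₂ * z₀ ^ (2 * γ))
    (z : ℝ → ℝ) (hz0 : z 0 = z₀)
    (hnn : ∀ t ∈ Ico 0 (1 / B), 0 ≤ z t)
    (hdiff : ∀ t ∈ Ico 0 (1 / B), DifferentiableAt ℝ z t)
    (hineq : ∀ t ∈ Ico 0 (1 / B),
      deriv z t + C₂ * z t ^ (2 * γ + 1) ≤ A * (1 - B * t) ^ (-((2 * γ + 1) / (2 * γ)))) :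
    ∀ t ∈ Ico 0 (1 / B), z t ≤ z₀ * (1 - B * t) ^ (-(1 / (2 * γ))) := by
  have h2γ : 2 * γ < 0 := by linarith
  have h2γne : 2 * γ ≠ 0 := h2γ.ne
  set e : ℝ := -(1 / (2 * γ)) with he
  set q : ℝ := -((2 * γ + 1) / (2 * γ)) with hqdef
  set p : ℝ := 2 * γ + 1 with hpdef
  clear_value e q p
  have he_pos : 0 < e := by
    rw [he]; simp only [neg_pos]; exact div_neg_of_pos_of_neg one_pos h2γ
  have hq : e - 1 = q := by
    rw [he, hqdef, hpdef, add_div, div_self h2γne]; ring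
  have heq : e * p = q := by
    rw [he, hqdef, hpdef]; field_simp
  have hp1 : p - 1 < 0 := by rw [hpdef]; linarith
  have hz2 : z₀ ^ p = z₀ ^ (2 * γ) * z₀ := by
    rw [hpdef]; exact Real.rpow_add_one hz₀.ne' _
  -- B > 0
  have hB0 : 0 < B := by
    have h1 : A - C₂ * z₀ ^ p < 0 := by linarith
    have h2 : B = 2 * γ * (A - C₂ * z₀ ^ p) / z₀ := by
      rw [hB, hz2]; field_simp
    rw [h2]
    exact div_pos (mul_pos_of_neg_of_neg h2γ h1) hz₀
  -- the comparison solution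
  set w : ℝ → ℝ := fun t => z₀ * (1 - B * t) ^ e with hw
  clear_value w
  -- derivative of w
  have hwderiv : ∀ x : ℝ, 0 < 1 - B * x →
      HasDerivAt w (z₀ * (e * (1 - B * x) ^ (e - 1) * (-B))) x := by
    intro x hgx
    have hg : HasDerivAt (fun t : ℝ => 1 - B * t) (-B) x := by
      simpa using ((hasDerivAt_id x).const_mul B).const_sub 1
    have h := (hg.rpow_const (p := e) (Or.inl hgx.ne')).const_mul z₀
    rw [hw]
    refine h.congr_deriv ?_
    ring
  -- key algebraic identity
  have hident : ∀ u : ℝ, 0 < u →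
      z₀ * (e * u ^ (e - 1) * (-B)) + C₂ * (z₀ * u ^ e) ^ p = A * u ^ q := by
    intro u hu
    have h1 : (z₀ * u ^ e) ^ p = z₀ ^ p * u ^ q := by
      rw [Real.mul_rpow hz₀.le (Real.rpow_nonneg hu.le _), ← Real.rpow_mul hu.le, heq]
    rw [h1, hq]
    have hcoef : z₀ * (e * (-B)) + C₂ * z₀ ^ p = A := by
      rw [he, hB, hz2]; field_simp [hγ.ne]; ring
    nlinarith [hcoef, Real.rpow_pos_of_pos hu q]
  intro t ht
  obtain ⟨ht0, htB⟩ := ht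
  have hgt : 0 < 1 - B * t := by
    have : B * t < B * (1 / B) := by exact mul_lt_mul_of_pos_left htB hB0
    rw [mul_one_div_cancel hB0.ne'] at this
    linarith
  -- positivity of 1 - B x on [0, t]
  have hgx : ∀ x ∈ Icc (0:ℝ) t, 0 < 1 - B * x := by
    intro x hx
    have : B * x ≤ B * t := mul_le_mul_of_nonneg_left hx.2 hB0.le
    linarith
  have hsub : Icc (0:ℝ) t ⊆ Ico 0 (1 / B) := fun x hx => ⟨hx.1, lt_of_le_of_lt hx.2 htB⟩
  set m : ℝ := z₀ * (1 - B * t) ^ e with hm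
  clear_value m
  have hm0 : 0 < m := by
    rw [hm]; exact mul_pos hz₀ (Real.rpow_pos_of_pos hgt _)
  have hwm : ∀ x ∈ Icc (0:ℝ) t, m ≤ w x := by
    intro x hx
    have h1 : 1 - B * t ≤ 1 - B * x := by
      have : B * x ≤ B * t := mul_le_mul_of_nonneg_left hx.2 hB0.le
      linarith
    rw [hm, hw]
    exact mul_le_mul_of_nonneg_left (Real.rpow_le_rpow hgt.le h1 he_pos.le) hz₀.le
  set L : ℝ := C₂ * |p| * m ^ (p - 1) + 1 with hL
  clear_value L
  have hL1 : (0:ℝ) ≤ C₂ * |p| * m ^ (p - 1) := by positivity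
  -- ε-perturbed comparison
  have hmain : ∀ ε : ℝ, 0 < ε → z t ≤ w t + ε * Real.exp (L * t) := by
    intro ε hε
    set Bd : ℝ → ℝ := fun x => w x + ε * Real.exp (L * x) with hBd
    set Bd' : ℝ → ℝ := fun x =>
      z₀ * (e * (1 - B * x) ^ (e - 1) * (-B)) + ε * (Real.exp (L * x) * L) with hBd'
    have hBdderiv : ∀ x ∈ Icc (0:ℝ) t, HasDerivAt Bd (Bd' x) x := by
      intro x hx
      have h1 := (hwderiv x (hgx x hx)).add
        ((((hasDerivAt_id x).const_mul L).exp).const_mul ε)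
      rw [hBd, hBd']
      refine h1.congr_deriv ?_
      simp [mul_comm]
    have hcz : ContinuousOn z (Icc 0 t) :=
      fun x hx => ((hdiff x (hsub hx)).continuousAt).continuousWithinAt
    have hdz : ∀ x ∈ Ico (0:ℝ) t, HasDerivWithinAt z (deriv z x) (Ici x) x :=
      fun x hx => ((hdiff x (hsub ⟨hx.1, hx.2.le⟩)).hasDerivAt).hasDerivWithinAt
    have h0 : z 0 ≤ Bd 0 := by
      simp only [hBd, hz0, hw, mul_zero, sub_zero, Real.one_rpow, mul_one, Real.exp_zero]
      linarith
    have hcBd : ContinuousOn Bd (Icc 0 t) :=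
      fun x hx => (hBdderiv x hx).continuousAt.continuousWithinAt
    have hdBd : ∀ x ∈ Ico (0:ℝ) t, HasDerivWithinAt Bd (Bd' x) (Ici x) x :=
      fun x hx => (hBdderiv x ⟨hx.1, hx.2.le⟩).hasDerivWithinAt
    have hbound : ∀ x ∈ Ico (0:ℝ) t, z x = Bd x → deriv z x < Bd' x := by
      intro x hx hcontact
      have hxI : x ∈ Icc (0:ℝ) t := ⟨hx.1, hx.2.le⟩
      have hgx' : 0 < 1 - B * x := hgx x hxI
      have h1 := hineq x (hsub hxI)
      have hwx : m ≤ w x := hwm x hxI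
      set δ : ℝ := ε * Real.exp (L * x) with hδdef
      clear_value δ
      have hδ : 0 < δ := by rw [hδdef]; positivity
      have hzx : z x = w x + δ := by rw [hδdef]; exact hcontact
      have hid := hident (1 - B * x) hgx'
      -- deriv z x ≤ w' x + C₂ ((w x)^p - (z x)^p)
      have h2 : deriv z x ≤ z₀ * (e * (1 - B * x) ^ (e - 1) * (-B))
          + C₂ * ((w x) ^ p - (z x) ^ p) := by
        have : deriv z x ≤ A * (1 - B * x) ^ q - C₂ * (z x) ^ p := by linarith [h1]
        calc deriv z x ≤ A * (1 - B * x) ^ q - C₂ * (z x) ^ p := this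
          _ = z₀ * (e * (1 - B * x) ^ (e - 1) * (-B))
              + C₂ * ((w x) ^ p - (z x) ^ p) := by rw [← hid]; rw [hw]; ring
      have h3 : (w x) ^ p - (z x) ^ p ≤ |p| * m ^ (p - 1) * δ := by
        rw [hzx]
        exact aux_rpow_diff hm0 hwx hδ hp1
      have h4 : C₂ * ((w x) ^ p - (z x) ^ p) ≤ (L - 1) * δ := by
        have := mul_le_mul_of_nonneg_left h3 hC₂.le
        rw [hL]
        nlinarith [this]
      have h5 : (L - 1) * δ < L * δ := by nlinarith
      have h6 : ε * (Real.exp (L * x) * L) = L * δ := by rw [hδdef]; ring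
      rw [hBd']
      simp only []
      rw [h6]
      linarith
    exact image_le_of_deriv_right_lt_deriv_boundary' hcz hdz h0 hcBd hdBd hbound
      (right_mem_Icc.mpr ht0)
  -- conclude by letting ε → 0
  have hfin : z t ≤ w t := by
    refine le_of_forall_pos_le_add fun ε hε => ?_
    have h1 := hmain (ε / Real.exp (L * t)) (by positivity)
    rwa [div_mul_cancel₀ _ (Real.exp_ne_zero _)] at h1
  rw [hw] at hfin
  rw [hm]
  simpa using hfin
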